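/- Fix an integer t ≥ 1, a finite set V, and a function u : {1,…,t} → V (u(s) is the vertex receiving the real update at step s). Say that a vertex x is updated at step t' ∈ {1,…,t} if x = u(s) for some s ∈ D(t') with s ≥ 1. Then for every vertex x that is updated at some step in {1,…,t}, the largest step t' ≤ t at which x is updated belongs to Prior-times(t). -/

import Mathlib

namespace Apasp

/-- `setBit t`: the position of the least significant 1 in the binary
representation of `t`, i.e. the largest `k` with `2^k ∣ t` (for `t ≥ 1`). -/
def setBit (t : ℕ) : ℕ := Nat.findGreatest (fun k => 2 ^ k ∣ t) t

/-- `D t = {t - 2^(setBit t) + 1, …, t}`. -/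
def D (t : ℕ) : Finset ℕ := Finset.Icc (t - 2 ^ setBit t + 1) t

/-- `priorTimes t`: the set of numbers obtained from `t` by choosing a bit
position `i` at which `t` has a 1 and zeroing all bits below position `i`. -/
def priorTimes (t : ℕ) : Finset ℕ :=
  ((Finset.range (t + 1)).filter fun i => t.testBit i).image fun i => 2 ^ i * (t / 2 ^ i)

lemma setBit_dvd (t : ℕ) (ht : 1 ≤ t) : 2 ^ setBit t ∣ t :=
  Nat.findGreatest_spec (P := fun k => 2 ^ k ∣ t) (Nat.zero_le t) (by simpa using one_dvd t)

lemma setBit_succ_not_dvd (t : ℕ) (ht : 1 ≤ t) : ¬ 2 ^ (setBit t + 1) ∣ t := by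
  intro h
  have h1 : setBit t + 1 ≤ t := by
    have h2 : 2 ^ (setBit t + 1) ≤ t := Nat.le_of_dvd ht h
    have h3 : setBit t + 1 < 2 ^ (setBit t + 1) := Nat.lt_two_pow_self
    omega
  exact Nat.findGreatest_is_greatest (Nat.lt_succ_self _) h1 h

lemma two_pow_succ_dvd_sub (t : ℕ) (ht : 1 ≤ t) :
    2 ^ (setBit t + 1) ∣ (t - 2 ^ setBit t) := by
  have hd := setBit_dvd t ht
  have hnd := setBit_succ_not_dvd t ht
  set b := setBit t with hb
  obtain ⟨k, hk⟩ := hd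
  have hk2 : k % 2 = 1 := by
    rcases Nat.even_or_odd k with he | ho
    · exfalso
      obtain ⟨c, hc⟩ := he
      exact hnd ⟨c, by rw [hk, hc, pow_succ]; ring⟩
    · obtain ⟨c, hc⟩ := ho; omega
  obtain ⟨c, hc⟩ : ∃ c, k = 2 * c + 1 := ⟨k / 2, by omega⟩
  refine ⟨c, ?_⟩
  rw [hk, hc, pow_succ]
  have hexp : 2 ^ b * (2 * c + 1) = 2 ^ b * 2 * c + 2 ^ b := by ring
  omega

lemma testBit_false_of_dvd {n i : ℕ} (h : 2 ^ (i + 1) ∣ n) : n.testBit i = false := by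
  obtain ⟨c, rfl⟩ := h
  rw [Nat.testBit_eq_decide_div_mod_eq, pow_succ, mul_assoc, Nat.mul_div_cancel_left _ (by positivity)]
  simp [Nat.mul_mod_right]

/-- Key structural ("non-crossing") lemma: if `t' ≤ t` and the interval `D t'`
starts above `t - 2^setBit t`, i.e. `t' > t - 2^setBit t`, then all of `D t'`
lies above `t - 2^setBit t`. -/
lemma cross {t t' : ℕ} (h1 : 1 ≤ t') (h2 : t' ≤ t) (h3 : t - 2 ^ setBit t < t') :
    t - 2 ^ setBit t ≤ t' - 2 ^ setBit t' := by
  have ht : 1 ≤ t := le_trans h1 h2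
  have hdj := setBit_dvd t' h1
  have hm2 := two_pow_succ_dvd_sub t ht
  have hpbt : 2 ^ setBit t ≤ t := Nat.le_of_dvd ht (setBit_dvd t ht)
  set b := setBit t with hb
  set j := setBit t' with hj
  set m := t - 2 ^ b with hm
  by_cases hc : 2 ^ j ∣ m
  · have hdiff : 2 ^ j ∣ (t' - m) := Nat.dvd_sub hdj hc
    have hle : 2 ^ j ≤ t' - m := Nat.le_of_dvd (by omega) hdiff
    omega
  · exfalso
    have hbj : b + 1 ≤ j := by
      by_contra hbj
      exact hc (dvd_trans (pow_dvd_pow 2 (by omega)) hm2)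
    have hq : 2 ^ (b + 1) ∣ 2 ^ j := pow_dvd_pow 2 hbj
    set r := m % 2 ^ j with hr
    have hrm : r ≤ m := Nat.mod_le _ _
    have hrlt : r < 2 ^ j := Nat.mod_lt _ (by positivity)
    have hqr : 2 ^ (b + 1) ∣ r := (Nat.dvd_mod_iff hq).mpr hm2
    have hr0 : r ≠ 0 := fun h0 => hc (Nat.dvd_of_mod_eq_zero (by omega))
    have hrub : r + 2 ^ (b + 1) ≤ 2 ^ j := by
      have hd1 : 2 ^ (b + 1) ∣ (2 ^ j - r) := Nat.dvd_sub hq hqr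
      have hd2 : 2 ^ (b + 1) ≤ 2 ^ j - r := Nat.le_of_dvd (by omega) hd1
      omega
    have hpb : 2 ^ b * 2 = 2 ^ (b + 1) := by rw [pow_succ]
    have hmr : 2 ^ j ∣ (m - r) := by
      have hdm := Nat.div_add_mod m (2 ^ j)
      exact ⟨m / 2 ^ j, by omega⟩
    have hfin : 2 ^ j ∣ (t' - (m - r)) := Nat.dvd_sub hdj hmr
    have h2b : (0:ℕ) < 2 ^ b := by positivity
    have hlt : t' - (m - r) < 2 ^ j := by omega
    have hpos : 0 < t' - (m - r) := by omega
    exact absurd (Nat.le_of_dvd hpos hfin) (not_le.mpr hlt)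

lemma mem_priorTimes_self {t : ℕ} (ht : 1 ≤ t) : t ∈ priorTimes t := by
  have hdb := setBit_dvd t ht
  have hdb2 := setBit_succ_not_dvd t ht
  set b := setBit t with hb
  simp only [priorTimes, Finset.mem_image, Finset.mem_filter, Finset.mem_range]
  refine ⟨b, ⟨?_, ?_⟩, Nat.mul_div_cancel' hdb⟩
  · have h1 : 2 ^ b ≤ t := Nat.le_of_dvd ht hdb
    have h2 : b < 2 ^ b := Nat.lt_two_pow_self
    omega
  · rw [Nat.testBit_eq_decide_div_mod_eq]
    obtain ⟨k, hk⟩ := hdb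
    rw [hk, Nat.mul_div_cancel_left _ (by positivity)]
    simp only [decide_eq_true_eq]
    rcases Nat.even_or_odd k with he | ho
    · exfalso
      obtain ⟨c, hc⟩ := he
      refine hdb2 ⟨c, ?_⟩
      rw [hk, hc, pow_succ]; ring
    · obtain ⟨c, hc⟩ := ho; omega

lemma priorTimes_sub_subset {t : ℕ} (ht : 1 ≤ t) :
    priorTimes (t - 2 ^ setBit t) ⊆ priorTimes t := by
  intro y hy
  have hm2 := two_pow_succ_dvd_sub t ht
  have hpbt : 2 ^ setBit t ≤ t := Nat.le_of_dvd ht (setBit_dvd t ht)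
  set b := setBit t with hb
  set m := t - 2 ^ b with hmdef
  simp only [priorTimes, Finset.mem_image, Finset.mem_filter, Finset.mem_range] at hy ⊢
  obtain ⟨i, ⟨hi1, hi2⟩, rfl⟩ := hy
  have hbi : b + 1 ≤ i := by
    by_contra hbi
    have hdd : 2 ^ (i + 1) ∣ m := dvd_trans (pow_dvd_pow 2 (by omega)) hm2
    rw [testBit_false_of_dvd hdd] at hi2
    exact absurd hi2 (by simp)
  have hdivi : 2 ^ (b + 1) ∣ 2 ^ i := pow_dvd_pow 2 hbi
  have hmod : 2 ^ (b + 1) ∣ m % 2 ^ i := (Nat.dvd_mod_iff hdivi).mpr hm2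
  have hmodlt : m % 2 ^ i < 2 ^ i := Nat.mod_lt _ (by positivity)
  have hsum : m % 2 ^ i + 2 ^ b < 2 ^ i := by
    have h1 : 2 ^ (b + 1) ∣ (2 ^ i - m % 2 ^ i) := Nat.dvd_sub hdivi hmod
    have h2 : 2 ^ (b + 1) ≤ 2 ^ i - m % 2 ^ i := Nat.le_of_dvd (by omega) h1
    have h3 : 2 ^ b * 2 = 2 ^ (b + 1) := by rw [pow_succ]
    omega
  have hdiv : t / 2 ^ i = m / 2 ^ i := by
    have hd := Nat.div_add_mod m (2 ^ i)
    have ht' : t = 2 ^ i * (m / 2 ^ i) + (m % 2 ^ i + 2 ^ b) := by omega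
    rw [ht', Nat.mul_add_div (by positivity), Nat.div_eq_of_lt hsum, add_zero]
  refine ⟨i, ⟨by omega, ?_⟩, by rw [hdiv]⟩
  rw [Nat.testBit_eq_decide_div_mod_eq] at hi2 ⊢
  rw [hdiv]
  exact hi2

lemma exists_gt {V : Type*} [DecidableEq V] (u : ℕ → V) (x : V) :
    ∀ t, ∀ t' ∈ (Finset.Icc 1 t).filter fun t' => ∃ s ∈ D t', 1 ≤ s ∧ u s = x,
      t' ∉ priorTimes t →
      ∃ t'' ∈ (Finset.Icc 1 t).filter fun t' => ∃ s ∈ D t', 1 ≤ s ∧ u s = x, t' < t'' := by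
  intro t
  induction t using Nat.strong_induction_on with
  | _ t ih =>
    intro t' ht' hnp
    simp only [Finset.mem_filter, Finset.mem_Icc] at ht'
    obtain ⟨⟨h1, h2⟩, s, hsD, hs1, hsx⟩ := ht'
    have ht : 1 ≤ t := le_trans h1 h2
    by_cases hcase : t - 2 ^ setBit t < t'
    · have hsDt : s ∈ D t := by
        simp only [D, Finset.mem_Icc] at hsD ⊢
        have hA := cross h1 h2 hcase
        omega
      refine ⟨t, ?_, ?_⟩
      · simp only [Finset.mem_filter, Finset.mem_Icc]
        exact ⟨⟨ht, le_refl t⟩, s, hsDt, hs1, hsx⟩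
      · rcases lt_or_eq_of_le h2 with h | h
        · exact h
        · subst h
          exact absurd (mem_priorTimes_self ht) hnp
    · push_neg at hcase
      set m := t - 2 ^ setBit t with hm
      have hmt : m < t := by
        have : (0:ℕ) < 2 ^ setBit t := by positivity
        omega
      have hmem : t' ∈ (Finset.Icc 1 m).filter fun t' => ∃ s ∈ D t', 1 ≤ s ∧ u s = x := by
        simp only [Finset.mem_filter, Finset.mem_Icc]
        exact ⟨⟨h1, hcase⟩, s, hsD, hs1, hsx⟩
      have hnp' : t' ∉ priorTimes m := fun h => hnp (priorTimes_sub_subset ht h)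
      obtain ⟨t'', ht'', hlt⟩ := ih m hmt t' hmem hnp'
      refine ⟨t'', ?_, hlt⟩
      simp only [Finset.mem_filter, Finset.mem_Icc] at ht'' ⊢
      exact ⟨⟨ht''.1.1, le_trans ht''.1.2 (le_of_lt hmt)⟩, ht''.2⟩

/-- The largest step `t' ≤ t` at which a vertex `x` is updated belongs to
`priorTimes t`. A vertex `x` is updated at step `t'` if `x = u s` for some
`s ∈ D t'` with `s ≥ 1`. -/
theorem stmt6 {V : Type*} [DecidableEq V] (t : ℕ) (ht : 1 ≤ t) (u : ℕ → V) (x : V)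
    (hne : ((Finset.Icc 1 t).filter fun t' => ∃ s ∈ D t', 1 ≤ s ∧ u s = x).Nonempty) :
    ((Finset.Icc 1 t).filter fun t' => ∃ s ∈ D t', 1 ≤ s ∧ u s = x).max' hne
      ∈ priorTimes t := by
  by_contra hnp
  obtain ⟨t'', ht'', hlt⟩ := exists_gt u x t _ (Finset.max'_mem _ hne) hnp
  exact absurd (Finset.le_max' _ _ ht'') (not_le.mpr hlt)

end Apasp
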